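/- (Lemma 3.6, Local Abelianness Implies Global Abelianness) Let N be an abelian network on G = (V,E) with vertex set partitioned as V = I ⊔ O, where the processors at output nodes in O never send messages. Suppose N halts on all inputs. Regard the induced subnetwork of interior nodes as a single processor P_I with input alphabet A_I = ⊔_{v∈I} A_v and state space Q_I = ∏_{v∈I} Q_v, processing an input word by running the network with a complete legal execution. Then P_I is an abelian processor: for any two input words ι, ι' ∈ A_I^* with |ι| = |ι'| and any initial state q ∈ Q_I, the final state of P_I is the same, and for each edge (v,u) ∈ E with v ∈ I, u ∈ O, and each letter a ∈ A_u, the number of letters a sent along (v,u) is the same. -/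
import Mathlib


/-- The letter-count vector `|w| ∈ ℕ^A` of a word `w ∈ A^*`. -/
def lc {A : Type*} [DecidableEq A] (w : List A) : A → ℕ := fun a => w.count a

/-- An abelian-network *data* structure on a directed graph with vertex set `V`, edge set `E`
(with source and target maps, allowing loops and multiple edges), total alphabet
`A = ⊔_v A_v` (the letter `a` belongs to the alphabet of the vertex `loc a`), and
state space `Q v` for the processor at vertex `v`.  The abelian hypothesis on the
processors is the separate predicate `AbelianNetwork.IsAbelian`. -/
structure AbelianNetwork (V E A : Type*) (Q : V → Type*) [DecidableEq V] [DecidableEq A] where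
  /-- source of an edge -/
  src : E → V
  /-- target of an edge -/
  tgt : E → V
  /-- the vertex whose input alphabet contains the letter `a` -/
  loc : A → V
  /-- the (finitely many) outgoing edges of each vertex -/
  outEdges : V → Finset E
  mem_outEdges : ∀ (e : E) (v : V), e ∈ outEdges v ↔ src e = v
  /-- single-letter transition function `T_v(a, ·)` of the processor at `v = loc a` -/
  trans : (a : A) → Q (loc a) → Q (loc a)
  /-- message-passing function: the word sent along the edge `e` (with `src e = loc a`)
  when the processor at `loc a` processes the letter `a` in state `q` -/
  msg : (e : E) → (a : A) → Q (loc a) → List A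
  /-- letters sent along `e` belong to the alphabet of the target of `e` -/
  msg_tgt : ∀ (e : E) (a : A) (q : Q (loc a)), src e = loc a → ∀ b ∈ msg e a q, loc b = tgt e

namespace AbelianNetwork

variable {V E A : Type*} {Q : V → Type*} [DecidableEq V] [DecidableEq A]
variable (N : AbelianNetwork V E A Q)

/-- The map `t_a : Q → Q` updating the `loc a` coordinate by `T_{loc a}(a, ·)` and
fixing all other coordinates. -/
def tact (a : A) (q : ∀ v, Q v) : ∀ v, Q v :=
  Function.update q (N.loc a) (N.trans a (q (N.loc a)))

/-- `t_w = t_{w_r} ∘ ⋯ ∘ t_{w_1}` for a word `w = w_1 ⋯ w_r`. -/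
def tword (w : List A) (q : ∀ v, Q v) : ∀ v, Q v :=
  w.foldl (fun q a => N.tact a q) q

/-- The word sent along the edge `e` when the letters of `w` are processed in order,
starting from the global state `q`.  (Extends the message-passing functions to words.) -/
def msgword (e : E) : List A → (∀ v, Q v) → List A
  | [], _ => []
  | a :: w, q =>
      (if N.src e = N.loc a then N.msg e a (q (N.loc a)) else []) ++ msgword e w (N.tact a q)

/-- `N(a, q_{loc a}) ∈ ℕ^A`: the vector counting the letters produced when the processor at
`loc a` processes the letter `a`, summed over the outgoing edges of `loc a`. -/
def Nletter (a : A) (q : ∀ v, Q v) : A → ℕ := fun b =>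
  ∑ e ∈ N.outEdges (N.loc a), (N.msg e a (q (N.loc a))).count b

/-- `N(w, q) = ∑_i N(w_i, q^{i-1}_{v(i)})` for a word `w = w_1 ⋯ w_r`. -/
def Nword : List A → (∀ v, Q v) → A → ℕ
  | [], _ => fun _ => 0
  | a :: w, q => fun b => N.Nletter a q b + Nword w (N.tact a q) b

/-- The network is *abelian*: permuting a word input to a single processor does not change
the resulting state and changes each output word only by permuting its letters. -/
def IsAbelian : Prop :=
  ∀ (v : V) (w w' : List A), (∀ a ∈ w, N.loc a = v) → (∀ a ∈ w', N.loc a = v) →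
    (w : Multiset A) = (w' : Multiset A) →
    ∀ q : ∀ u, Q u,
      N.tword w q = N.tword w' q ∧
      ∀ e : E, ((N.msgword e w q : Multiset A) = (N.msgword e w' q : Multiset A))

/-- The state transition `π_a(x.q) = (x - 1_a + N(a, q_{loc a})).t_a(q)` of the whole
network, viewed as a single automaton with states `x.q ∈ ℤ^A × Q`. -/
def piLetter (a : A) (s : (A → ℤ) × (∀ v, Q v)) : (A → ℤ) × (∀ v, Q v) :=
  (fun b => s.1 b - (if b = a then 1 else 0) + (N.Nletter a s.2 b : ℤ), N.tact a s.2)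

/-- `π_w = π_{w_r} ∘ ⋯ ∘ π_{w_1}`. -/
def piWord (w : List A) (s : (A → ℤ) × (∀ v, Q v)) : (A → ℤ) × (∀ v, Q v) :=
  w.foldl (fun s a => N.piLetter a s) s

/-- The word `w` is a *legal execution* from `x.q`: each letter is a legal move
(`x_a ≥ 1`) from the state obtained by executing the previous letters. -/
def Legal : List A → ((A → ℤ) × (∀ v, Q v)) → Prop
  | [], _ => True
  | a :: w, s => 1 ≤ s.1 a ∧ Legal w (N.piLetter a s)

/-- The word `w` is a *complete execution* from `x.q`: after executing `w`,
no letters remain to be processed. -/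
def Complete (w : List A) (s : (A → ℤ) × (∀ v, Q v)) : Prop :=
  ∀ a : A, (N.piWord w s).1 a ≤ 0

/-- A canonical word with letter-count vector `u ∈ ℕ^A`. -/
noncomputable def vecWord [Fintype A] (u : A → ℕ) : List A :=
  (Finset.univ : Finset A).toList.flatMap fun a => List.replicate (u a) a

/-- `N(u, q)` for a vector `u ∈ ℕ^A`, defined as `N(w, q)` for a word `w` with `|w| = u`. -/
noncomputable def Nvec [Fintype A] (u : A → ℕ) (q : ∀ v, Q v) : A → ℕ := N.Nword (vecWord u) q

end AbelianNetwork

namespace AbelianNetwork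

section Aux

variable {V E A : Type*} {Q : V → Type*} [DecidableEq V] [DecidableEq A]
variable (N : AbelianNetwork V E A Q)

lemma piWord_cons' (a : A) (w : List A) (s : (A → ℤ) × (∀ v, Q v)) :
    N.piWord (a :: w) s = N.piWord w (N.piLetter a s) := rfl

lemma tword_cons' (a : A) (w : List A) (q : ∀ v, Q v) :
    N.tword (a :: w) q = N.tword w (N.tact a q) := rfl

lemma snd_piWord (w : List A) : ∀ s : (A → ℤ) × (∀ v, Q v), (N.piWord w s).2 = N.tword w s.2 := by
  induction w with
  | nil => intro s; rfl
  | cons a w ih => intro s; exact ih (N.piLetter a s)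

lemma msgword_cons (e : E) (a : A) (w : List A) (q : ∀ v, Q v) :
    N.msgword e (a :: w) q =
      (if N.src e = N.loc a then N.msg e a (q (N.loc a)) else []) ++ N.msgword e w (N.tact a q) := rfl

lemma msgword_append (e : E) (u w : List A) : ∀ q : ∀ v, Q v,
    N.msgword e (u ++ w) q = N.msgword e u q ++ N.msgword e w (N.tword u q) := by
  induction u with
  | nil => intro q; rfl
  | cons a u ih =>
      intro q
      rw [List.cons_append, msgword_cons, msgword_cons, ih, List.append_assoc, tword_cons']

lemma count_of_coe_eq {l l' : List A} (h : (l : Multiset A) = (l' : Multiset A)) (c : A) :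
    l.count c = l'.count c := by
  simpa using congrArg (Multiset.count c) h

lemma Nword_pair (a b : A) (q : ∀ v, Q v) (c : A) :
    N.Nword [a, b] q c = N.Nletter a q c + N.Nletter b (N.tact a q) c := by
  simp [Nword]

lemma pair_comm (hN : N.IsAbelian) (a b : A) (q : ∀ v, Q v) :
    N.tword [a, b] q = N.tword [b, a] q ∧
    (∀ e : E, ((N.msgword e [a, b] q : Multiset A) = (N.msgword e [b, a] q : Multiset A))) ∧
    N.Nword [a, b] q = N.Nword [b, a] q := by
  by_cases h : N.loc b = N.loc a
  · have hperm : (([a, b] : List A) : Multiset A) = (([b, a] : List A) : Multiset A) :=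
      Multiset.coe_eq_coe.mpr (List.Perm.swap b a [])
    have hm1 : ∀ x ∈ [a, b], N.loc x = N.loc a := by
      intro x hx
      simp only [List.mem_cons, List.not_mem_nil, or_false] at hx
      rcases hx with rfl | rfl
      · rfl
      · exact h
    have hm2 : ∀ x ∈ [b, a], N.loc x = N.loc a := by
      intro x hx
      simp only [List.mem_cons, List.not_mem_nil, or_false] at hx
      rcases hx with rfl | rfl
      · exact h
      · rfl
    have H := hN (N.loc a) [a, b] [b, a] hm1 hm2 hperm q
    refine ⟨H.1, H.2, ?_⟩
    funext c
    have key : ∀ x y : A, N.loc x = N.loc a → N.loc y = N.loc a →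
        N.Nword [x, y] q c = ∑ e ∈ N.outEdges (N.loc a), (N.msgword e [x, y] q).count c := by
      intro x y hx hy
      rw [Nword_pair]
      unfold Nletter
      have h1 : N.outEdges (N.loc x) = N.outEdges (N.loc a) := by rw [hx]
      have h2 : N.outEdges (N.loc y) = N.outEdges (N.loc a) := by rw [hy]
      rw [h1, h2, ← Finset.sum_add_distrib]
      refine Finset.sum_congr rfl fun e he => ?_
      have hsrc : N.src e = N.loc a := (N.mem_outEdges e _).mp he
      rw [msgword_cons, msgword_cons, if_pos (hsrc.trans hx.symm), if_pos (hsrc.trans hy.symm)]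
      simp [msgword]
    rw [key a b rfl h, key b a h rfl]
    exact Finset.sum_congr rfl fun e _ => count_of_coe_eq (H.2 e) c
  · have h1 : (N.tact a q) (N.loc b) = q (N.loc b) := Function.update_of_ne h _ _
    have h2 : (N.tact b q) (N.loc a) = q (N.loc a) := Function.update_of_ne (Ne.symm h) _ _
    refine ⟨?_, ?_, ?_⟩
    · show N.tact b (N.tact a q) = N.tact a (N.tact b q)
      unfold tact
      rw [Function.update_of_ne h, Function.update_of_ne (Ne.symm h)]
      exact Function.update_comm (Ne.symm h) _ _ _
    · intro e
      rw [msgword_cons, msgword_cons, msgword_cons, msgword_cons]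
      show ((_ ++ (_ ++ N.msgword e [] _) : List A) : Multiset A) = _
      rw [show N.msgword e [] (N.tact b (N.tact a q)) = [] from rfl,
          show N.msgword e [] (N.tact a (N.tact b q)) = [] from rfl,
          h1, h2]
      simp only [List.append_nil, ← Multiset.coe_add]
      exact add_comm _ _
    · funext c
      rw [Nword_pair, Nword_pair]
      unfold Nletter
      rw [h1, h2]
      exact Nat.add_comm _ _

lemma tact_comm (hN : N.IsAbelian) (a b : A) (q : ∀ v, Q v) :
    N.tact b (N.tact a q) = N.tact a (N.tact b q) := (N.pair_comm hN a b q).1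

lemma fst_piLetter (x : A) (t : (A → ℤ) × (∀ v, Q v)) (c : A) :
    (N.piLetter x t).1 c = t.1 c - (if c = x then 1 else 0) + (N.Nletter x t.2 c : ℤ) := rfl

lemma snd_piLetter' (x : A) (t : (A → ℤ) × (∀ v, Q v)) :
    (N.piLetter x t).2 = N.tact x t.2 := rfl

lemma piLetter_comm (hN : N.IsAbelian) (a b : A) (s : (A → ℤ) × (∀ v, Q v)) :
    N.piLetter b (N.piLetter a s) = N.piLetter a (N.piLetter b s) := by
  refine Prod.ext (funext fun c => ?_) ?_
  · rw [fst_piLetter, fst_piLetter, fst_piLetter, fst_piLetter,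
      snd_piLetter', snd_piLetter']
    have hc := congrFun ((N.pair_comm hN a b s.2).2.2) c
    rw [Nword_pair, Nword_pair] at hc
    split_ifs <;> omega
  · rw [snd_piLetter', snd_piLetter', snd_piLetter', snd_piLetter']
    exact N.tact_comm hN a b s.2

lemma fst_piLetter_mono (a b : A) (h : b ≠ a) (s : (A → ℤ) × (∀ v, Q v)) :
    s.1 b ≤ (N.piLetter a s).1 b := by
  show s.1 b ≤ s.1 b - (if b = a then 1 else 0) + (N.Nletter a s.2 b : ℤ)
  rw [if_neg h]
  omega

lemma step (hN : N.IsAbelian) (a : A) : ∀ (w : List A) (s : (A → ℤ) × (∀ v, Q v)),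
    N.Legal w s → N.Complete w s → 1 ≤ s.1 a →
    ∃ t : List A, N.Legal t (N.piLetter a s) ∧ N.Complete t (N.piLetter a s) ∧
      N.piWord t (N.piLetter a s) = N.piWord w s ∧
      ∀ e : E, ((N.msgword e (a :: t) s.2 : Multiset A) = (N.msgword e w s.2 : Multiset A)) := by
  intro w
  induction w with
  | nil =>
      intro s _ hc ha
      have h2 : s.1 a ≤ 0 := hc a
      omega
  | cons b r ih =>
      intro s hl hc ha
      by_cases hba : b = a
      · subst hba
        exact ⟨r, hl.2, hc, rfl, fun e => rfl⟩
      · have hl1 : (1 : ℤ) ≤ s.1 b := hl.1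
        have hlr : N.Legal r (N.piLetter b s) := hl.2
        have hcr : N.Complete r (N.piLetter b s) := hc
        have ha' : (1 : ℤ) ≤ (N.piLetter b s).1 a :=
          le_trans ha (N.fst_piLetter_mono b a (Ne.symm hba) s)
        obtain ⟨t, htl, htc, htp, htm⟩ := ih (N.piLetter b s) hlr hcr ha'
        have hcomm := N.piLetter_comm hN a b s
        have hsnd : (N.piLetter b s).2 = N.tact b s.2 := rfl
        rw [hsnd] at htm
        refine ⟨b :: t, ⟨le_trans hl1 (N.fst_piLetter_mono a b hba s), ?_⟩, ?_, ?_, ?_⟩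
        · rw [hcomm]; exact htl
        · show N.Complete t (N.piLetter b (N.piLetter a s))
          rw [hcomm]
          intro c
          rw [htp]
          exact hcr c
        · show N.piWord t (N.piLetter b (N.piLetter a s)) = _
          rw [hcomm, htp]; rfl
        · intro e
          have e1 : N.msgword e (a :: b :: t) s.2 =
              N.msgword e [a, b] s.2 ++ N.msgword e t (N.tword [a, b] s.2) :=
            N.msgword_append e [a, b] t s.2
          have e2 : N.msgword e (b :: a :: t) s.2 =
              N.msgword e [b, a] s.2 ++ N.msgword e t (N.tword [b, a] s.2) :=
            N.msgword_append e [b, a] t s.2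
          have e3 : N.msgword e (b :: a :: t) s.2 =
              N.msgword e [b] s.2 ++ N.msgword e (a :: t) (N.tact b s.2) := by
            have := N.msgword_append e [b] (a :: t) s.2
            simpa [tword] using this
          have e4 : N.msgword e (b :: r) s.2 =
              N.msgword e [b] s.2 ++ N.msgword e r (N.tact b s.2) := by
            have := N.msgword_append e [b] r s.2
            simpa [tword] using this
          calc ((N.msgword e (a :: b :: t) s.2 : Multiset A))
              = (N.msgword e [a, b] s.2 : Multiset A)
                + (N.msgword e t (N.tword [a, b] s.2) : Multiset A) := by
                rw [e1, Multiset.coe_add]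
            _ = (N.msgword e [b, a] s.2 : Multiset A)
                + (N.msgword e t (N.tword [b, a] s.2) : Multiset A) := by
                rw [(N.pair_comm hN a b s.2).2.1 e,
                    show N.tword [a, b] s.2 = N.tword [b, a] s.2 from (N.pair_comm hN a b s.2).1]
            _ = ((N.msgword e (b :: a :: t) s.2 : Multiset A)) := by rw [e2, Multiset.coe_add]
            _ = (N.msgword e [b] s.2 : Multiset A)
                + (N.msgword e (a :: t) (N.tact b s.2) : Multiset A) := by
                rw [e3, Multiset.coe_add]
            _ = (N.msgword e [b] s.2 : Multiset A)
                + (N.msgword e r (N.tact b s.2) : Multiset A) := by rw [htm e]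
            _ = ((N.msgword e (b :: r) s.2 : Multiset A)) := by rw [e4, Multiset.coe_add]

lemma diamond (hN : N.IsAbelian) : ∀ (w' w : List A) (s : (A → ℤ) × (∀ v, Q v)),
    N.Legal w s → N.Complete w s → N.Legal w' s →
    ∃ t : List A, N.Legal t (N.piWord w' s) ∧ N.Complete t (N.piWord w' s) ∧
      N.piWord t (N.piWord w' s) = N.piWord w s ∧
      ∀ e : E, ((N.msgword e (w' ++ t) s.2 : Multiset A) = (N.msgword e w s.2 : Multiset A)) := by
  intro w'
  induction w' with
  | nil => exact fun w s hl hc _ => ⟨w, hl, hc, rfl, fun e => rfl⟩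
  | cons a r ih =>
      intro w s hl hc hl'
      obtain ⟨t₁, h1l, h1c, h1p, h1m⟩ := N.step hN a w s hl hc hl'.1
      obtain ⟨t, htl, htc, htp, htm⟩ := ih t₁ (N.piLetter a s) h1l h1c hl'.2
      have hsnd : (N.piLetter a s).2 = N.tact a s.2 := rfl
      rw [hsnd] at htm
      refine ⟨t, htl, htc, htp.trans h1p, ?_⟩
      intro e
      have e1 : N.msgword e ((a :: r) ++ t) s.2 =
          N.msgword e [a] s.2 ++ N.msgword e (r ++ t) (N.tact a s.2) := by
        have := N.msgword_append e [a] (r ++ t) s.2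
        simpa [tword] using this
      have e2 : N.msgword e (a :: t₁) s.2 =
          N.msgword e [a] s.2 ++ N.msgword e t₁ (N.tact a s.2) := by
        have := N.msgword_append e [a] t₁ s.2
        simpa [tword] using this
      calc ((N.msgword e ((a :: r) ++ t) s.2 : Multiset A))
          = (N.msgword e [a] s.2 : Multiset A)
            + (N.msgword e (r ++ t) (N.tact a s.2) : Multiset A) := by
            rw [e1, Multiset.coe_add]
        _ = (N.msgword e [a] s.2 : Multiset A)
            + (N.msgword e t₁ (N.tact a s.2) : Multiset A) := by rw [htm e]
        _ = ((N.msgword e (a :: t₁) s.2 : Multiset A)) := by rw [e2, Multiset.coe_add]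
        _ = _ := h1m e

end Aux

end AbelianNetwork

/-- **Lemma 3.6 (Local Abelianness Implies Global Abelianness).** Suppose the vertex set is
partitioned as `V = I ⊔ O`, the processors at the output nodes in `O` never send messages,
and the network halts on all inputs.  Regard the induced subnetwork of interior nodes as a
single processor `P_I` with input alphabet `A_I = ⊔_{v ∈ I} A_v` and state space
`Q_I = ∏_{v ∈ I} Q_v`, processing an input word by running the network with a complete
legal execution.  Then `P_I` is abelian: for any two input words `ι, ι'` in the interior
alphabet with `|ι| = |ι'|` and any initial state `q`, the final states of the interior
processors agree, and for each edge `(v,u)` with `v ∈ I`, `u ∈ O` and each letter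
`b ∈ A_u`, the number of letters `b` sent along `(v,u)` is the same. -/
theorem AbelianNetwork.local_to_global {V E A : Type*} {Q : V → Type*}
    [DecidableEq V] [DecidableEq A] (N : AbelianNetwork V E A Q) (hN : N.IsAbelian)
    (I O : Set V) (hpart : ∀ v : V, (v ∈ I ∧ v ∉ O) ∨ (v ∈ O ∧ v ∉ I))
    (hout : ∀ (e : E) (a : A) (qa : Q (N.loc a)), N.src e ∈ O → N.msg e a qa = [])
    (hhalt : ∀ (x : A → ℕ) (q : ∀ v, Q v),
      ∃ w : List A, N.Complete w (fun a => (x a : ℤ), q))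
    (ι ι' : List A) (hι : ∀ a ∈ ι, N.loc a ∈ I) (hι' : ∀ a ∈ ι', N.loc a ∈ I)
    (hc : lc ι = lc ι') (q : ∀ v, Q v) (w w' : List A)
    (hwl : N.Legal w (fun a => (lc ι a : ℤ), q))
    (hwc : N.Complete w (fun a => (lc ι a : ℤ), q))
    (hw'l : N.Legal w' (fun a => (lc ι' a : ℤ), q))
    (hw'c : N.Complete w' (fun a => (lc ι' a : ℤ), q)) :
    (∀ v ∈ I, N.tword w q v = N.tword w' q v) ∧
    (∀ e : E, N.src e ∈ I → N.tgt e ∈ O →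
      ∀ b : A, (N.msgword e w q).count b = (N.msgword e w' q).count b) := by
  have hs : ((fun a => (lc ι' a : ℤ), q) : (A → ℤ) × (∀ v, Q v))
      = (fun a => (lc ι a : ℤ), q) := by rw [hc]
  rw [hs] at hw'l hw'c
  obtain ⟨t, htl, htc, htp, htm⟩ :=
    N.diamond hN w' w (fun a => (lc ι a : ℤ), q) hwl hwc hw'l
  have ht0 : t = [] := by
    cases t with
    | nil => rfl
    | cons c t' =>
        have h1 := htl.1
        have h2 := hw'c c
        omega
  subst ht0
  have htp' : N.piWord w' ((fun a => (lc ι a : ℤ), q) : (A → ℤ) × (∀ v, Q v))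
      = N.piWord w (fun a => (lc ι a : ℤ), q) := htp
  have hq : N.tword w' q = N.tword w q := by
    have h2 := congrArg Prod.snd htp'
    rw [N.snd_piWord, N.snd_piWord] at h2
    exact h2
  constructor
  · intro v _
    rw [hq]
  · intro e _ _ b
    have hm := htm e
    rw [List.append_nil] at hm
    exact (AbelianNetwork.count_of_coe_eq hm b).symm
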